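/- arXiv:0704.1969 — 2 statements merged into one kernel-verified Lean document; each statement's English description precedes it below -/
import Mathlib

section
/- Let u be a snakeshape of size n, and let P_u be the poset on the n cells of u generated by the relations: the bottom-row cells of u (the bottom cells of the height-2 columns and the cells of the height-1 columns), read from right to left, form a chain of P_u with the rightmost cell lowest; and for each height-2 column, the top cell of that column lies strictly below the bottom cell of that column in P_u. Then the number of standard Young-Fibonacci tableaux of shape u equals n! divided by the product, over all cells c of u, of the number of cells c′ with c′ ≤ c in P_u. -/
/-- A snakeshape: a composition all of whose parts equal 1 or 2, recorded as the
list of column heights, read left to right. -/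
def IsSnakeshape (u : List ℕ) : Prop := ∀ p ∈ u, p = 1 ∨ p = 2

/-- The shape (list of column heights, left to right) of a tableau given as a
list of columns, each column listed top to bottom. -/
def shapeOf (t : List (List ℕ)) : List ℕ := t.map List.length

/-- `t` is a standard Young–Fibonacci tableau of size `n`: columns are listed left
to right, each column top to bottom; every column has height 1 or 2; in each
column the top entry exceeds the bottom entry; every topmost entry exceeds all
entries in columns strictly to its right; and the entries are exactly `1,…,n`. -/
def IsYFT (n : ℕ) (t : List (List ℕ)) : Prop :=
  (∀ c ∈ t, c.length = 1 ∨ c.length = 2) ∧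
  (∀ c ∈ t, List.Chain' (fun a b => b < a) c) ∧
  (∀ i j : ℕ, i < j → j < t.length →
    ∀ a ∈ (t.getD i []).head?, ∀ x ∈ t.getD j [], x < a) ∧
  (t.flatten).Perm (List.range' 1 n)

/-- Auxiliary, fuelled version of the Young–Fibonacci insertion: reading the word
from right to left, each letter read gets matched to the largest not-yet-matched
letter occurring strictly to its left which exceeds it (forming a height-2 column,
larger letter on top), and otherwise stays single (a height-1 column); columns are
listed in the order in which their status was settled. -/
def insertColsAux : ℕ → List ℕ → List (List ℕ)
  | 0, _ => []
  | _, [] => []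
  | fuel+1, w =>
    let x := w.getLast!
    let w' := w.dropLast
    match (w'.filter (fun y => decide (x < y))).max? with
    | none => [x] :: insertColsAux fuel w'
    | some m => [m, x] :: insertColsAux fuel (w'.erase m)

/-- The Young–Fibonacci insertion tableau of a word. -/
def insertCols (w : List ℕ) : List (List ℕ) := insertColsAux w.length w

/-- The word `σ(1)⋯σ(n)` of a permutation of `{1,…,n}` (letters `1,…,n`). -/
def permWord {n : ℕ} (σ : Equiv.Perm (Fin n)) : List ℕ :=
  List.ofFn (fun i => (σ i : ℕ) + 1)

/-- min(t): read the columns right to left, each column top to bottom. -/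
def minWord (t : List (List ℕ)) : List ℕ := t.reverse.flatten

/-- max(t): the top row left to right, then the bottom row right to left. -/
def maxWord (t : List (List ℕ)) : List ℕ :=
  (t.filterMap fun c => if c.length = 2 then c.head? else none) ++
    (t.filterMap List.getLast?).reverse

/-- Number of inversions of a word: pairs of positions `p < q` with `w p > w q`. -/
def invCount (w : List ℕ) : ℕ :=
  ((Finset.range w.length ×ˢ Finset.range w.length).filter
    (fun p => p.1 < p.2 ∧ w.getD p.2 0 < w.getD p.1 0)).card

/-- `w'` is obtained from `w` by swapping two adjacent letters `x < y` (in this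
order in `w`), thus creating exactly one more inversion. -/
def AdjSwap (w w' : List ℕ) : Prop :=
  ∃ l r : List ℕ, ∃ x y : ℕ, x < y ∧ w = l ++ x :: y :: r ∧ w' = l ++ y :: x :: r

/-- The (right) weak order on words. -/
def WordWeakLe (w w' : List ℕ) : Prop := Relation.ReflTransGen AdjSwap w w'

/-- `Shift t t'`: `t'` is obtained from `t` by shifting one entry. Columns are
listed top to bottom, so `[b, a]` is the column with top `b`, bottom `a`. -/
inductive Shift : List (List ℕ) → List (List ℕ) → Prop
  /-- the bottom entry `a` of a height-2 column bumps up the single entry `c` of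
  the column on its left; the top entry `b` falls down. -/
  | bump2 (l r : List (List ℕ)) (c b a : ℕ) :
      Shift (l ++ [[c], [b, a]] ++ r) (l ++ [[c, a], [b]] ++ r)
  /-- the entry `a` of a height-1 column bumps up the single entry `c` of the
  column on its left; its own column disappears. -/
  | bump1 (l r : List (List ℕ)) (c a : ℕ) :
      Shift (l ++ [[c], [a]] ++ r) (l ++ [[c, a]] ++ r)
  /-- `a < c` replaces `c` at the bottom of the height-2 column on its left, and
  `c < b` takes the former place of `a`. -/
  | exch (l r : List (List ℕ)) (d c b a : ℕ) (h1 : a < c) (h2 : c < b) :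
      Shift (l ++ [[d, c], [b, a]] ++ r) (l ++ [[d, a], [b, c]] ++ r)
  /-- `a < c` replaces `c` at the bottom of the height-2 column on its left; since
  `b < c`, `c` becomes a new height-1 column in between and `b` falls down. -/
  | split2 (l r : List (List ℕ)) (d c b a : ℕ) (h1 : a < c) (h2 : b < c) :
      Shift (l ++ [[d, c], [b, a]] ++ r) (l ++ [[d, a], [c], [b]] ++ r)
  /-- `a < c` replaces `c` at the bottom of the height-2 column on its left; `c`
  becomes a new height-1 column and the height-1 column of `a` disappears. -/
  | split1 (l r : List (List ℕ)) (d c a : ℕ) (h1 : a < c) :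
      Shift (l ++ [[d, c], [a]] ++ r) (l ++ [[d, a], [c]] ++ r)

/-- The bottom row of a tableau, read left to right: the bottom entries of the
height-2 columns together with the entries of the height-1 columns. -/
def bottomRow (t : List (List ℕ)) : List ℕ := t.filterMap List.getLast?

/-- Generating relations of the canonical poset `P_t`: `canoGen t x y` means `x`
is covered... i.e. `x <_P y` is a generating relation: consecutive bottom-row
entries read right to left (rightmost lowest), and each top entry of a height-2
column below the corresponding bottom entry. -/
def canoGen (t : List (List ℕ)) (x y : ℕ) : Prop :=
  (∃ i : ℕ, i + 1 < (bottomRow t).length ∧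
    (bottomRow t).getD (i + 1) 0 = x ∧ (bottomRow t).getD i 0 = y) ∨
  (∃ c ∈ t, c.length = 2 ∧ c.head? = some x ∧ c.getLast? = some y)

/-- `w` is (the word of) a linear extension of the canonical poset `P_t`. -/
def IsLinExt (t : List (List ℕ)) (w : List ℕ) : Prop :=
  ∀ x y : ℕ, Relation.ReflTransGen (canoGen t) x y → x ≠ y →
    w.idxOf x < w.idxOf y

/-- The set of inversions of a word: pairs `(j, i)` with `i < j` such that `j`
occurs before `i`. -/
def InvSet (w : List ℕ) : Set (ℕ × ℕ) :=
  {p | p.2 < p.1 ∧ p.1 ∈ w ∧ p.2 ∈ w ∧ w.idxOf p.1 < w.idxOf p.2}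

/-- The set of non-inversions of a word: pairs `(i, j)` with `i < j` such that `i`
occurs before `j`. -/
def NonInvSet (w : List ℕ) : Set (ℕ × ℕ) :=
  {p | p.1 < p.2 ∧ p.1 ∈ w ∧ p.2 ∈ w ∧ w.idxOf p.1 < w.idxOf p.2}

/-- The row canonical tableau of shape `u` (size `n`): topmost cells are labelled
`n, n-1, …` from left to right, bottom cells of height-2 columns are labelled
`1, 2, …` from left to right. -/
def rTcols (n : ℕ) (u : List ℕ) : List (List ℕ) :=
  (List.range u.length).map (fun i =>
    if u.getD i 0 = 2 then [n - i, (u.take i).count 2 + 1] else [n - i])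

/-- The column canonical tableau of shape `u`: cells are labelled `1, 2, …` taking
columns right to left, in each column the bottom cell before the top cell. -/
def cTcols (u : List ℕ) : List (List ℕ) :=
  (List.range u.length).map (fun i =>
    let s := u.sum - (u.take (i + 1)).sum
    if u.getD i 0 = 2 then [s + 2, s + 1] else [s + 1])

/-- `t` is a semistandard Young–Fibonacci tableau of shape `u`: entries are
positive integers, in each column the top entry strictly exceeds the bottom one,
and every topmost entry is `≥` all entries in columns strictly to its right. -/
def IsSSYFT (u : List ℕ) (t : List (List ℕ)) : Prop :=
  shapeOf t = u ∧
  (∀ c ∈ t, List.Chain' (fun a b => b < a) c) ∧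
  (∀ i j : ℕ, i < j → j < t.length →
    ∀ a ∈ (t.getD i []).head?, ∀ x ∈ t.getD j [], x ≤ a) ∧
  (∀ x ∈ t.flatten, 1 ≤ x)

/-- `t` has content `v`: for each `i`, `t` has exactly `v_i` entries equal to `i`.-/
def ContentIs (v : List ℕ) (t : List (List ℕ)) : Prop :=
  ∀ i : ℕ, t.flatten.count (i + 1) = v.getD i 0

/-- The Young–Fibonacci number `N_{u,v}`: the number of semistandard
Young–Fibonacci tableaux of shape `u` and content `v`. -/
noncomputable def YFNumber (u v : List ℕ) : ℕ :=
  Nat.card {t : List (List ℕ) // IsSSYFT u t ∧ ContentIs v t}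

/-- The multiset (as a list indexed by positions) `v^{1-}`: delete a part equal
to 1, or decrease a larger part by 1. -/
def vMinus (v : List ℕ) : List (List ℕ) :=
  (List.range v.length).map (fun p =>
    if v.getD p 0 = 1 then v.eraseIdx p else v.set p (v.getD p 0 - 1))

/-- The list of snakeshapes covering `u` in the Young–Fibonacci lattice:
(i) prepend a part 1; (ii) replace the leftmost part equal to 1 by a 2;
(iii) if `u` starts with `k ≥ 1` parts equal to 2, insert a part 1 just after the
`i`-th part, `1 ≤ i ≤ k`. -/
def coversList (u : List ℕ) : List (List ℕ) :=
  [1 :: u] ++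
    (if (u.takeWhile (fun p => decide (p = 2))).length < u.length then
      [u.take (u.takeWhile (fun p => decide (p = 2))).length ++
        2 :: u.drop ((u.takeWhile (fun p => decide (p = 2))).length + 1)]
    else []) ++
    ((List.range (u.takeWhile (fun p => decide (p = 2))).length).map
      (fun i => u.insertIdx (i + 1) 1))

/-- Okada's analogue of the Kostka numbers (fuelled implementation of the
defining recurrences; `v.length` is enough fuel). -/
def OkadaKAux : ℕ → List ℕ → List ℕ → ℕ
  | _, [], [] => 1
  | fuel+1, 1 :: u, 1 :: v => OkadaKAux fuel u v
  | fuel+1, 2 :: u, 2 :: v => OkadaKAux fuel u v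
  | _+1, 1 :: _, 2 :: _ => 0
  | fuel+1, 2 :: u, 1 :: v => ((coversList u).map (fun w => OkadaKAux fuel w v)).sum
  | _, _, _ => 0

/-- Okada's analogue `K_{u,v}` of the Kostka numbers, determined by
`K_{∅,∅} = 1`, `K_{1u,1v} = K_{u,v}`, `K_{2u,2v} = K_{u,v}`, `K_{1u,2v} = 0` and
`K_{2u,1v} = Σ_{w covers u} K_{w,v}`. -/
def OkadaK (u v : List ℕ) : ℕ := OkadaKAux v.length u v

/-- The cells of a snakeshape `u`: pairs `(i, r)` with `i` the (0-based) column
index and `r = 0` for the bottom cell, `r = 1` for the top cell. -/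
def cellsFinset (u : List ℕ) : Finset (ℕ × ℕ) :=
  (Finset.range u.length ×ˢ Finset.range 2).filter (fun p => p.2 < u.getD p.1 0)

/-- Generating relations of the poset `P_u` on the cells of `u`: the bottom-row
cells read right to left form a chain (rightmost lowest), and the top cell of
each height-2 column lies strictly below its bottom cell. -/
def cellGen (u : List ℕ) (c c' : ℕ × ℕ) : Prop :=
  (∃ i : ℕ, i + 1 < u.length ∧ c = (i + 1, 0) ∧ c' = (i, 0)) ∨
  (∃ i : ℕ, i < u.length ∧ u.getD i 0 = 2 ∧ c = (i, 1) ∧ c' = (i, 0))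

/-- The order relation of the poset `P_u`. -/
def cellLe (u : List ℕ) (c c' : ℕ × ℕ) : Prop :=
  Relation.ReflTransGen (cellGen u) c c'

section Aux
open Finset

/-- product of tail sums -/
def tailProd (u : List ℕ) : ℕ := ∏ i ∈ Finset.range u.length, (u.drop i).sum

/-- number of SYFTs, recursively -/
def Fyft : List ℕ → ℕ
  | [] => 1
  | p :: u => (if p = 2 then u.sum + 1 else 1) * Fyft u

lemma tailProd_cons (p : ℕ) (u : List ℕ) :
    tailProd (p :: u) = (p + u.sum) * tailProd u := by
  unfold tailProd
  rw [List.length_cons, Finset.prod_range_succ']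
  simp [mul_comm]

lemma snake_tail {p : ℕ} {u : List ℕ} (hu : IsSnakeshape (p :: u)) :
    (p = 1 ∨ p = 2) ∧ IsSnakeshape u :=
  ⟨hu p (by simp), fun q hq => hu q (by simp [hq])⟩

lemma tailProd_pos {u : List ℕ} (hu : IsSnakeshape u) : 0 < tailProd u := by
  induction u with
  | nil => simp [tailProd]
  | cons p u ih =>
    obtain ⟨hp, hu'⟩ := snake_tail hu
    rw [tailProd_cons]
    have h1 := ih hu'
    have h2 : 0 < p := by rcases hp with h | h <;> omega
    positivity

lemma factorial_eq_tailProd_mul_Fyft {u : List ℕ} (hu : IsSnakeshape u) :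
    (u.sum).factorial = tailProd u * Fyft u := by
  induction u with
  | nil => simp [tailProd, Fyft]
  | cons p u ih =>
    obtain ⟨hp, hu'⟩ := snake_tail hu
    have IH := ih hu'
    rw [List.sum_cons, tailProd_cons, Fyft]
    rcases hp with h | h <;> subst h
    · rw [if_neg (by norm_num), one_mul,
        show 1 + u.sum = u.sum + 1 from by omega, Nat.factorial_succ, IH]
      ring
    · rw [if_pos rfl,
        show 2 + u.sum = (u.sum + 1) + 1 from by omega, Nat.factorial_succ,
        Nat.factorial_succ, IH]
      ring

lemma natCard_subtype_finset {α : Type*} (s : Finset α) (p : α → Prop) [DecidablePred p] :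
    Nat.card {x // x ∈ s ∧ p x} = (s.filter p).card := by
  rw [← Nat.card_eq_finsetCard]
  exact Nat.card_congr (Equiv.subtypeEquivRight (by simp [Finset.mem_filter]))

lemma mem_cellsFinset {u : List ℕ} {c : ℕ × ℕ} :
    c ∈ cellsFinset u ↔ c.1 < u.length ∧ c.2 < 2 ∧ c.2 < u.getD c.1 0 := by
  simp [cellsFinset, Finset.mem_filter, Finset.mem_product, and_assoc]

lemma snake_getD {u : List ℕ} (hu : IsSnakeshape u) {j : ℕ} (hj : j < u.length) :
    u.getD j 0 = 1 ∨ u.getD j 0 = 2 := by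
  rw [List.getD_eq_getElem u 0 hj]
  exact hu _ (List.getElem_mem _)

lemma cellLe_char {u : List ℕ} (hu : IsSnakeshape u) {c c' : ℕ × ℕ} (h : cellLe u c' c) :
    c' = c ∨ (c.2 = 0 ∧ c.1 ≤ c'.1 ∧ c' ∈ cellsFinset u) := by
  induction h with
  | refl => exact Or.inl rfl
  | tail _ hstep ih =>
    rename_i x c hx
    rcases hstep with ⟨i, hi, hxi, hci⟩ | ⟨i, hi, hui, hxi, hci⟩
    · subst hxi; subst hci
      rcases ih with rfl | ⟨h2, h1, hmem⟩
      · refine Or.inr ⟨rfl, Nat.le_succ i, ?_⟩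
        rw [mem_cellsFinset]
        refine ⟨hi, Nat.zero_lt_two, ?_⟩
        show 0 < u.getD (i+1) 0
        have := snake_getD hu hi
        omega
      · refine Or.inr ⟨rfl, ?_, hmem⟩
        simp only at h1 ⊢
        omega
    · subst hxi; subst hci
      rcases ih with rfl | ⟨h2, h1, hmem⟩
      · refine Or.inr ⟨rfl, le_refl _, ?_⟩
        rw [mem_cellsFinset]
        refine ⟨hi, Nat.one_lt_two, ?_⟩
        show 1 < u.getD i 0
        omega
      · simp at h2

lemma cellLe_bottom_chain (u : List ℕ) (i d : ℕ) (h : i + d < u.length) :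
    cellLe u (i + d, 0) (i, 0) := by
  induction d with
  | zero => exact Relation.ReflTransGen.refl
  | succ d ih =>
    refine Relation.ReflTransGen.head ?_ (ih (by omega))
    exact Or.inl ⟨i + d, by omega, by ring_nf, rfl⟩

lemma cellLe_of_mem {u : List ℕ} (hu : IsSnakeshape u) {i : ℕ} {c' : ℕ × ℕ}
    (hi : i ≤ c'.1) (hc' : c' ∈ cellsFinset u) : cellLe u c' (i, 0) := by
  rw [mem_cellsFinset] at hc'
  obtain ⟨h1, h2, h3⟩ := hc'
  obtain ⟨j, r⟩ := c'
  simp only at h1 h2 h3 hi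
  have hchain : cellLe u (j, 0) (i, 0) := by
    have := cellLe_bottom_chain u i (j - i) (by omega)
    rwa [show i + (j - i) = j from by omega] at this
  rcases (by omega : r = 0 ∨ r = 1) with rfl | rfl
  · exact hchain
  · refine Relation.ReflTransGen.head ?_ hchain
    refine Or.inr ⟨j, h1, ?_, rfl, rfl⟩
    have := snake_getD hu h1
    omega

lemma drop_sum_eq (u : List ℕ) (i : ℕ) :
    (u.drop i).sum = ∑ j ∈ Finset.range u.length, if i ≤ j then u.getD j 0 else 0 := by
  induction u generalizing i with
  | nil => simp
  | cons p u ih =>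
    rw [List.length_cons, Finset.sum_range_succ']
    cases i with
    | zero =>
      simp only [List.drop_zero, List.sum_cons, Nat.zero_le, if_true,
        List.getD_cons_succ, List.getD_cons_zero]
      have h0 := ih 0
      rw [List.drop_zero] at h0
      rw [h0]
      simp [Nat.add_comm]
    | succ i =>
      simp only [List.drop_succ_cons, if_neg (by omega : ¬ i + 1 ≤ 0), add_zero,
        List.getD_cons_succ]
      rw [ih i]
      apply Finset.sum_congr rfl
      intro j _
      simp [Nat.succ_le_succ_iff]

lemma downset_card_bottom {u : List ℕ} (hu : IsSnakeshape u) {i : ℕ} (hi : i < u.length) :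
    Nat.card {c' : ℕ × ℕ // c' ∈ cellsFinset u ∧ cellLe u c' (i, 0)} = (u.drop i).sum := by
  classical
  rw [natCard_subtype_finset]
  have hset : (cellsFinset u).filter (fun c' => cellLe u c' (i, 0)) =
      (cellsFinset u).filter (fun c' => i ≤ c'.1) := by
    ext c'
    simp only [Finset.mem_filter, and_congr_right_iff]
    intro hmem
    constructor
    · intro h
      rcases cellLe_char hu h with rfl | ⟨_, h1, _⟩
      · exact le_refl i
      · exact h1
    · intro h; exact cellLe_of_mem hu h hmem
  rw [hset]
  unfold cellsFinset
  rw [Finset.filter_filter, Finset.card_filter, Finset.sum_product, drop_sum_eq]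
  apply Finset.sum_congr rfl
  intro j hj
  rw [Finset.mem_range] at hj
  have hg := snake_getD hu hj
  rw [Finset.sum_range_succ, Finset.sum_range_succ, Finset.sum_range_zero]
  by_cases hij : i ≤ j <;> rcases hg with h | h <;>
    simp only [List.getD_eq_getElem?_getD] at h <;> simp [hij, h]

lemma downset_card_top {u : List ℕ} (hu : IsSnakeshape u) {i : ℕ} (hi : i < u.length)
    (h2 : u.getD i 0 = 2) :
    Nat.card {c' : ℕ × ℕ // c' ∈ cellsFinset u ∧ cellLe u c' (i, 1)} = 1 := by
  classical
  rw [natCard_subtype_finset]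
  have hset : (cellsFinset u).filter (fun c' => cellLe u c' (i, 1)) = {(i, 1)} := by
    ext c'
    simp only [Finset.mem_filter, Finset.mem_singleton]
    constructor
    · rintro ⟨hmem, hle⟩
      rcases cellLe_char hu hle with rfl | ⟨habs, _, _⟩
      · rfl
      · simp at habs
    · rintro rfl
      exact ⟨by rw [mem_cellsFinset]; exact ⟨hi, Nat.one_lt_two, by show 1 < u.getD i 0; omega⟩,
        Relation.ReflTransGen.refl⟩
  rw [hset, Finset.card_singleton]

lemma hook_prod {u : List ℕ} (hu : IsSnakeshape u) :
    (∏ c ∈ cellsFinset u, Nat.card {c' : ℕ × ℕ // c' ∈ cellsFinset u ∧ cellLe u c' c})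
      = tailProd u := by
  classical
  rw [← Finset.prod_filter_mul_prod_filter_not (cellsFinset u) (fun c => c.2 = 0)]
  have htop : ∀ c ∈ (cellsFinset u).filter (fun c => ¬ c.2 = 0),
      Nat.card {c' : ℕ × ℕ // c' ∈ cellsFinset u ∧ cellLe u c' c} = 1 := by
    intro c hc
    rw [Finset.mem_filter, mem_cellsFinset] at hc
    obtain ⟨⟨h1, h2, h3⟩, h4⟩ := hc
    have hr : c.2 = 1 := by omega
    have hu2 : u.getD c.1 0 = 2 := by
      have := snake_getD hu h1
      omega
    have hc' : c = (c.1, 1) := by rw [← hr]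
    rw [hc']
    exact downset_card_top hu h1 hu2
  rw [Finset.prod_congr rfl htop, Finset.prod_const_one, mul_one]
  have himg : (cellsFinset u).filter (fun c => c.2 = 0) =
      (Finset.range u.length).image (fun j => (j, (0 : ℕ))) := by
    ext c
    simp only [Finset.mem_filter, mem_cellsFinset, Finset.mem_image, Finset.mem_range]
    constructor
    · rintro ⟨⟨h1, h2, h3⟩, h4⟩
      exact ⟨c.1, h1, by rw [← h4]⟩
    · rintro ⟨a, ha, rfl⟩
      refine ⟨⟨ha, Nat.zero_lt_two, ?_⟩, rfl⟩
      show 0 < u.getD a 0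
      have := snake_getD hu ha
      omega
  rw [himg, Finset.prod_image (fun a _ b _ h => by simpa using (Prod.mk.injEq ..).mp h |>.1)]
  exact Finset.prod_congr rfl fun j hj =>
    downset_card_bottom hu (Finset.mem_range.mp hj)

section Squish

/-- relabelling map deleting the value `b` -/
def squish (b x : ℕ) : ℕ := if b < x then x - 1 else x

/-- relabelling map inserting the value `b` -/
def unsquish (b x : ℕ) : ℕ := if b ≤ x then x + 1 else x

lemma squish_unsquish (b x : ℕ) : squish b (unsquish b x) = x := by
  unfold squish unsquish; split_ifs <;> omega

lemma unsquish_squish {b x : ℕ} (h : x ≠ b) : unsquish b (squish b x) = x := by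
  unfold squish unsquish; split_ifs <;> omega

lemma squish_lt {b x y : ℕ} (hx : x ≠ b) (hy : y ≠ b) (h : x < y) :
    squish b x < squish b y := by
  unfold squish; split_ifs <;> omega

lemma unsquish_lt {b x y : ℕ} (h : x < y) : unsquish b x < unsquish b y := by
  unfold unsquish; split_ifs <;> omega

lemma unsquish_le {b x : ℕ} : unsquish b x ≤ x + 1 := by
  unfold unsquish; split_ifs <;> omega

lemma getD_map_map (t : List (List ℕ)) (f : ℕ → ℕ) (j : ℕ) :
    (t.map (List.map f)).getD j [] = (t.getD j []).map f := by
  rcases lt_or_ge j t.length with hj | hj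
  · rw [List.getD_eq_getElem _ _ (by simpa), List.getD_eq_getElem _ _ hj, List.getElem_map]
  · rw [List.getD_eq_default _ _ (by simpa), List.getD_eq_default _ _ hj]
    simp

lemma mem_getD_flatten {t : List (List ℕ)} {x j : ℕ} (h : x ∈ t.getD j []) :
    x ∈ t.flatten := by
  by_cases hj : j < t.length
  · rw [List.getD_eq_getElem _ _ hj] at h
    exact List.mem_flatten.mpr ⟨t[j], List.getElem_mem hj, h⟩
  · rw [List.getD_eq_default _ _ (by omega)] at h
    simp at h

lemma chain'_gt_map {f : ℕ → ℕ} {l : List ℕ}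
    (h : ∀ x ∈ l, ∀ y ∈ l, x < y → f x < f y)
    (hc : List.Chain' (fun a b => b < a) l) :
    List.Chain' (fun a b => b < a) (l.map f) := by
  have : IsTrans ℕ (fun a b : ℕ => b < a) := ⟨fun a b c h1 h2 => h2.trans h1⟩
  simp only [List.Chain', List.isChain_iff_pairwise] at hc ⊢
  rw [List.pairwise_map]
  exact hc.imp_of_mem (fun ha hb hr => h _ hb _ ha hr)

lemma map_sub_one_range' (s m : ℕ) :
    (List.range' (s + 1) m).map (fun x => x - 1) = List.range' s m := by
  induction m generalizing s with
  | zero => simp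
  | succ m ih => rw [List.range'_succ, List.range'_succ, List.map_cons, ih (s + 1)]; simp

lemma map_squish_id {b s m : ℕ} (h : s + m ≤ b + 1) :
    (List.range' s m).map (squish b) = List.range' s m := by
  rw [List.map_congr_left (g := id), List.map_id]
  intro a ha
  rw [List.mem_range'_1] at ha
  unfold squish
  rw [if_neg (by omega)]
  rfl

lemma map_unsquish_id {b s m : ℕ} (h : s + m ≤ b) :
    (List.range' s m).map (unsquish b) = List.range' s m := by
  rw [List.map_congr_left (g := id), List.map_id]
  intro a ha
  rw [List.mem_range'_1] at ha
  unfold unsquish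
  rw [if_neg (by omega)]
  rfl

lemma map_squish_high {b m k : ℕ} (hb : b = k + 1) :
    (List.range' (k + 2) m).map (squish b) = List.range' (k + 1) m := by
  rw [← map_sub_one_range' (k + 1) m]
  apply List.map_congr_left
  intro a ha
  rw [List.mem_range'_1] at ha
  unfold squish
  rw [if_pos (by omega)]

lemma map_add_one_range' (s m : ℕ) :
    (List.range' s m).map (fun x => x + 1) = List.range' (s + 1) m := by
  induction m generalizing s with
  | zero => simp
  | succ m ih => rw [List.range'_succ, List.range'_succ, List.map_cons, ih (s + 1)]

lemma map_unsquish_high {b m k : ℕ} (hb : b = k + 1) :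
    (List.range' (k + 1) m).map (unsquish b) = List.range' (k + 2) m := by
  rw [← map_add_one_range' (k + 1) m]
  apply List.map_congr_left
  intro a ha
  rw [List.mem_range'_1] at ha
  unfold unsquish
  rw [if_pos (by omega)]

lemma range'_split (k n : ℕ) (h : k ≤ n) :
    List.range' 1 n = List.range' 1 k ++ List.range' (k + 1) (n - k) := by
  have h2 := @List.range'_append 1 k (n - k) 1
  rw [show 1 + 1 * k = k + 1 from by omega, show k + (n - k) = n from by omega] at h2
  exact h2.symm

lemma erase_range' {k n : ℕ} (h : k < n) :
    (List.range' 1 n).erase (k + 1) =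
      List.range' 1 k ++ List.range' (k + 2) (n - k - 1) := by
  obtain ⟨m, hm⟩ : ∃ m, n - k = m + 1 := ⟨n - k - 1, by omega⟩
  rw [range'_split k n (by omega), List.erase_append_right _
    (by rw [List.mem_range'_1]; omega), hm, List.range'_succ, List.erase_cons_head]
  rfl

lemma map_squish_erase_range' {k n : ℕ} (h : k ≤ n) :
    ((List.range' 1 (n + 1)).erase (k + 1)).map (squish (k + 1)) = List.range' 1 n := by
  rw [erase_range' (by omega : k < n + 1), List.map_append,
    map_squish_id (by omega), map_squish_high rfl,
    show n + 1 - k - 1 = n - k from by omega]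
  exact (range'_split k n h).symm

lemma map_unsquish_range' {k n : ℕ} (h : k ≤ n) :
    (List.range' 1 n).map (unsquish (k + 1)) =
      List.range' 1 k ++ List.range' (k + 2) (n - k) := by
  rw [range'_split k n h, List.map_append, map_unsquish_id (by omega),
    map_unsquish_high rfl]

end Squish

section YFTFacts

lemma yft_mem_flatten {n : ℕ} {t : List (List ℕ)} (ht : IsYFT n t) {x : ℕ}
    (hx : x ∈ t.flatten) : 1 ≤ x ∧ x ≤ n := by
  have := (ht.2.2.2.mem_iff).mp hx
  rw [List.mem_range'_1] at this
  omega

lemma yft_head_eq {n : ℕ} {c : List ℕ} {t₂ : List (List ℕ)} (ht : IsYFT n (c :: t₂))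
    {a : ℕ} (ha : a ∈ c.head?) : a = n := by
  obtain ⟨h1, h2, h3, h4⟩ := ht
  have hac : a ∈ c := List.mem_of_mem_head? ha
  have haf : a ∈ (c :: t₂).flatten := by simp [hac]
  have han := (yft_mem_flatten ⟨h1, h2, h3, h4⟩ haf).2
  have hn1 : 1 ≤ n := (yft_mem_flatten ⟨h1, h2, h3, h4⟩ haf).1.trans han
  have hnf : n ∈ (c :: t₂).flatten := by
    rw [h4.mem_iff, List.mem_range'_1]; omega
  rw [List.flatten_cons, List.mem_append] at hnf
  rcases hnf with hnc | hnt
  · -- n ∈ c; c has head a and is decreasing, so a = n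
    rcases h1 c (by simp) with hl | hl
    · obtain ⟨z, rfl⟩ := List.length_eq_one_iff.mp hl
      simp only [List.head?_cons, Option.mem_def, Option.some.injEq] at ha
      simp only [List.mem_singleton] at hnc
      omega
    · obtain ⟨z, w, rfl⟩ := List.length_eq_two.mp hl
      have hzw := h2 _ (by simp : [z, w] ∈ ([z,w] :: t₂))
      simp only [List.Chain', List.isChain_pair] at hzw
      simp only [List.head?_cons, Option.mem_def, Option.some.injEq] at ha
      simp only [List.mem_cons, List.mem_singleton] at hnc
      subst ha
      rcases hnc with rfl | hnc
      · rfl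
      · simp only [List.mem_cons, List.not_mem_nil, or_false] at hnc
        omega
  · -- n in a later column: contradiction with h3
    rw [List.mem_flatten] at hnt
    obtain ⟨l, hl, hnl⟩ := hnt
    obtain ⟨j, hj, rfl⟩ := List.mem_iff_getElem.mp hl
    have := h3 0 (j + 1) (by omega) (by simp [Nat.lt_succ_iff]; omega) a (by simpa using ha) n
      (by rw [List.getD_cons_succ, List.getD_eq_getElem _ _ hj]; exact hnl)
    omega

lemma yft_cons_struct {p : ℕ} {u : List ℕ} {t : List (List ℕ)}
    (hsh : shapeOf t = p :: u) :
    ∃ c t₂, t = c :: t₂ ∧ c.length = p ∧ shapeOf t₂ = u := by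
  cases t with
  | nil => simp [shapeOf] at hsh
  | cons c t₂ =>
    rw [shapeOf, List.map_cons, List.cons.injEq] at hsh
    exact ⟨c, t₂, rfl, hsh.1, hsh.2⟩

end YFTFacts

section Main

lemma range'_succ_right (n : ℕ) : List.range' 1 (n + 1) = List.range' 1 n ++ [n + 1] := by
  rw [List.range'_concat]
  congr 2
  omega

lemma erase_top_range' (n : ℕ) :
    (List.range' 1 (n + 1)).erase (n + 1) = List.range' 1 n := by
  rw [range'_succ_right, List.erase_append_right _ (by rw [List.mem_range'_1]; omega),
    List.erase_cons_head, List.append_nil]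

lemma isYFT_tail_third {n : ℕ} {c : List ℕ} {s : List (List ℕ)} (ht : IsYFT n (c :: s)) :
    ∀ i j : ℕ, i < j → j < s.length →
      ∀ a ∈ (s.getD i []).head?, ∀ x ∈ s.getD j [], x < a := by
  intro i j hij hj a ha x hx
  exact ht.2.2.1 (i + 1) (j + 1) (by omega) (by simp; omega) a
    (by rwa [List.getD_cons_succ]) x (by rwa [List.getD_cons_succ])

lemma isYFT_cons {n : ℕ} {c : List ℕ} {s : List (List ℕ)}
    (hlen : c.length = 1 ∨ c.length = 2)
    (hchain : List.Chain' (fun a b => b < a) c)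
    (hhead : ∀ a ∈ c.head?, ∀ x ∈ s.flatten, x < a)
    (h1 : ∀ d ∈ s, d.length = 1 ∨ d.length = 2)
    (h2 : ∀ d ∈ s, List.Chain' (fun a b => b < a) d)
    (h3 : ∀ i j : ℕ, i < j → j < s.length →
      ∀ a ∈ (s.getD i []).head?, ∀ x ∈ s.getD j [], x < a)
    (h4 : (c ++ s.flatten).Perm (List.range' 1 n)) :
    IsYFT n (c :: s) := by
  refine ⟨?_, ?_, ?_, by rwa [List.flatten_cons]⟩
  · intro d hd
    rcases List.mem_cons.mp hd with rfl | hd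
    · exact hlen
    · exact h1 d hd
  · intro d hd
    rcases List.mem_cons.mp hd with rfl | hd
    · exact hchain
    · exact h2 d hd
  · intro i j hij hj a ha x hx
    cases j with
    | zero => omega
    | succ j =>
      rw [List.getD_cons_succ] at hx
      cases i with
      | zero => exact hhead a (by simpa using ha) x (mem_getD_flatten hx)
      | succ i =>
        exact h3 i j (by omega) (by simp at hj; omega) a
          (by rwa [List.getD_cons_succ] at ha) x hx

lemma shapeOf_map_map (t : List (List ℕ)) (f : ℕ → ℕ) :
    shapeOf (t.map (List.map f)) = shapeOf t := by
  simp [shapeOf, Function.comp_def]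

def yft_one_equiv (n : ℕ) (u : List ℕ) (hn : n = u.sum + 1) :
    {t : List (List ℕ) // IsYFT n t ∧ shapeOf t = 1 :: u} ≃
      {s : List (List ℕ) // IsYFT u.sum s ∧ shapeOf s = u} := by
  subst hn
  exact {
    toFun := fun x => ⟨x.val.tail, by
      obtain ⟨t, ht, hsh⟩ := x
      obtain ⟨c, t₂, rfl, hc1, hsh₂⟩ := yft_cons_struct hsh
      obtain ⟨a, rfl⟩ := List.length_eq_one_iff.mp hc1
      have ha : a = u.sum + 1 := yft_head_eq ht (by simp)
      subst ha
      simp only [List.tail_cons]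
      refine ⟨⟨fun d hd => ht.1 d (List.mem_cons_of_mem _ hd),
        fun d hd => ht.2.1 d (List.mem_cons_of_mem _ hd),
        isYFT_tail_third ht, ?_⟩, hsh₂⟩
      have h4 := ht.2.2.2
      rw [List.flatten_cons, List.singleton_append,
        List.cons_perm_iff_perm_erase, erase_top_range'] at h4
      exact h4.2⟩
    invFun := fun x => ⟨[u.sum + 1] :: x.val, by
      obtain ⟨s, hs, hsh⟩ := x
      refine ⟨isYFT_cons (Or.inl rfl) (by simp [List.Chain']) ?_ hs.1 hs.2.1 hs.2.2.1 ?_,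
        by simpa [shapeOf] using hsh⟩
      · intro a ha x hx
        simp only [List.head?_cons, Option.mem_def, Option.some.injEq] at ha
        have := (yft_mem_flatten hs hx).2
        omega
      · rw [List.singleton_append, range'_succ_right]
        exact (hs.2.2.2.cons _).trans
          (by simpa using (List.perm_middle (a := u.sum + 1)
            (l₁ := List.range' 1 u.sum) (l₂ := [])).symm)⟩
    left_inv := fun x => by
      obtain ⟨t, ht, hsh⟩ := x
      obtain ⟨c, t₂, rfl, hc1, hsh₂⟩ := yft_cons_struct hsh
      obtain ⟨a, rfl⟩ := List.length_eq_one_iff.mp hc1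
      have ha : a = u.sum + 1 := yft_head_eq ht (by simp)
      subst ha
      rfl
    right_inv := fun x => rfl }

lemma yft_two_struct {n : ℕ} {u : List ℕ} {t : List (List ℕ)}
    (ht : IsYFT n t) (hsh : shapeOf t = 2 :: u) :
    ∃ b t₂, t = [n, b] :: t₂ ∧ shapeOf t₂ = u ∧ 1 ≤ b ∧ b + 1 ≤ n ∧
      b ∉ t₂.flatten := by
  obtain ⟨c, t₂, rfl, hc2, hsh₂⟩ := yft_cons_struct hsh
  obtain ⟨z, w, rfl⟩ := List.length_eq_two.mp hc2
  have hz : z = n := yft_head_eq ht (by simp)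
  subst hz
  have hchain := ht.2.1 _ List.mem_cons_self
  simp only [List.Chain', List.isChain_pair] at hchain
  have hw1 : 1 ≤ w := (yft_mem_flatten ht (by simp)).1
  have hnd := (ht.2.2.2.nodup_iff).mpr (List.nodup_range' (s := 1))
  rw [List.flatten_cons, List.cons_append, List.cons_append, List.nil_append] at hnd
  rw [List.nodup_cons, List.nodup_cons] at hnd
  exact ⟨w, t₂, rfl, hsh₂, hw1, by omega, hnd.2.1⟩

lemma unsquish_squish_list {b : ℕ} {t₂ : List (List ℕ)} (h : b ∉ t₂.flatten) :
    (t₂.map (List.map (squish b))).map (List.map (unsquish b)) = t₂ := by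
  rw [List.map_map]
  conv_rhs => rw [← List.map_id t₂]
  apply List.map_congr_left
  intro d hd
  simp only [Function.comp_apply, List.map_map, id_eq]
  conv_rhs => rw [← List.map_id d]
  apply List.map_congr_left
  intro x hx
  simp only [Function.comp_apply, id_eq]
  exact unsquish_squish (fun hxb => h (hxb ▸ List.mem_flatten.mpr ⟨d, hd, hx⟩))

lemma squish_unsquish_list (b : ℕ) (s : List (List ℕ)) :
    (s.map (List.map (unsquish b))).map (List.map (squish b)) = s := by
  rw [List.map_map]
  conv_rhs => rw [← List.map_id s]
  apply List.map_congr_left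
  intro d _
  simp [List.map_map, Function.comp_def, squish_unsquish]

lemma squish_yft {n b : ℕ} {t₂ : List (List ℕ)}
    (hb1 : 1 ≤ b) (hb2 : b + 1 ≤ n + 2) (hbmem : b ∉ t₂.flatten)
    (ht : IsYFT (n + 2) ([n + 2, b] :: t₂)) :
    IsYFT n (t₂.map (List.map (squish b))) := by
  have hne : ∀ x ∈ t₂.flatten, x ≠ b := fun x hx hxb => hbmem (hxb ▸ hx)
  refine ⟨?_, ?_, ?_, ?_⟩
  · intro d hd
    obtain ⟨d₀, hd₀, rfl⟩ := List.mem_map.mp hd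
    rw [List.length_map]
    exact ht.1 d₀ (List.mem_cons_of_mem _ hd₀)
  · intro d hd
    obtain ⟨d₀, hd₀, rfl⟩ := List.mem_map.mp hd
    refine chain'_gt_map ?_ (ht.2.1 d₀ (List.mem_cons_of_mem _ hd₀))
    intro x hx y hy hxy
    exact squish_lt (hne x (List.mem_flatten.mpr ⟨d₀, hd₀, hx⟩))
      (hne y (List.mem_flatten.mpr ⟨d₀, hd₀, hy⟩)) hxy
  · intro i j hij hj a ha x hx
    rw [List.length_map] at hj
    rw [getD_map_map, List.head?_map] at ha
    rw [getD_map_map] at hx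
    rw [Option.mem_def, Option.map_eq_some_iff] at ha
    obtain ⟨a₀, ha₀, rfl⟩ := ha
    obtain ⟨x₀, hx₀, rfl⟩ := List.mem_map.mp hx
    exact squish_lt (hne _ (mem_getD_flatten hx₀))
      (hne _ (mem_getD_flatten (List.mem_of_mem_head? ha₀)))
      (isYFT_tail_third ht i j hij hj a₀ ha₀ x₀ hx₀)
  · have h4 := ht.2.2.2
    rw [List.flatten_cons, List.cons_append, List.cons_append, List.nil_append] at h4
    rw [List.cons_perm_iff_perm_erase] at h4
    have h4' := h4.2
    rw [show (n + 2 : ℕ) = (n + 1) + 1 from rfl, erase_top_range'] at h4'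
    rw [List.cons_perm_iff_perm_erase] at h4'
    have h5 := (h4'.2).map (squish b)
    obtain ⟨k, rfl⟩ : ∃ k, b = k + 1 := ⟨b - 1, by omega⟩
    rw [map_squish_erase_range' (by omega)] at h5
    rw [← List.map_flatten]
    exact h5

lemma unsquish_yft {n k : ℕ} {s : List (List ℕ)} (hk : k ≤ n) (hs : IsYFT n s) :
    IsYFT (n + 2) ([n + 2, k + 1] :: s.map (List.map (unsquish (k + 1)))) := by
  have hflat : (s.map (List.map (unsquish (k + 1)))).flatten
      = s.flatten.map (unsquish (k + 1)) := List.map_flatten.symm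
  refine isYFT_cons (Or.inr rfl) (by simp [List.Chain']; omega) ?_ ?_ ?_ ?_ ?_
  · intro a ha x hx
    simp only [List.head?_cons, Option.mem_def, Option.some.injEq] at ha
    subst ha
    rw [hflat] at hx
    obtain ⟨y, hy, rfl⟩ := List.mem_map.mp hx
    have := (yft_mem_flatten hs hy).2
    have := unsquish_le (b := k + 1) (x := y)
    omega
  · intro d hd
    obtain ⟨d₀, hd₀, rfl⟩ := List.mem_map.mp hd
    rw [List.length_map]
    exact hs.1 d₀ hd₀
  · intro d hd
    obtain ⟨d₀, hd₀, rfl⟩ := List.mem_map.mp hd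
    exact chain'_gt_map (fun x _ y _ hxy => unsquish_lt hxy) (hs.2.1 d₀ hd₀)
  · intro i j hij hj a ha x hx
    rw [List.length_map] at hj
    rw [getD_map_map, List.head?_map] at ha
    rw [getD_map_map] at hx
    rw [Option.mem_def, Option.map_eq_some_iff] at ha
    obtain ⟨a₀, ha₀, rfl⟩ := ha
    obtain ⟨x₀, hx₀, rfl⟩ := List.mem_map.mp hx
    exact unsquish_lt (hs.2.2.1 i j hij hj a₀ ha₀ x₀ hx₀)
  · -- permutation condition
    rw [hflat]
    have h5 := (hs.2.2.2).map (unsquish (k + 1))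
    rw [map_unsquish_range' hk] at h5
    have hdecomp : List.range' 1 (n + 2) =
        List.range' 1 k ++ ((k + 1) :: (List.range' (k + 2) (n - k) ++ [n + 2])) := by
      rw [range'_split k (n + 2) (by omega)]
      congr 1
      rw [show n + 2 - k = (n - k) + 1 + 1 from by omega, List.range'_succ,
        List.range'_concat]
      congr 3
      omega
    rw [hdecomp]
    have p1 : ([n + 2, k + 1] ++ s.flatten.map (unsquish (k + 1))).Perm
        ((n + 2) :: (k + 1) :: (List.range' 1 k ++ List.range' (k + 2) (n - k))) := by
      rw [List.cons_append, List.cons_append, List.nil_append]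
      exact (h5.cons _).cons _
    have p2 : ((n + 2) :: (k + 1) :: (List.range' 1 k ++ List.range' (k + 2) (n - k))).Perm
        ((k + 1) :: (n + 2) :: (List.range' 1 k ++ List.range' (k + 2) (n - k))) :=
      List.Perm.swap _ _ _
    have p3 : ((n + 2) :: (List.range' 1 k ++ List.range' (k + 2) (n - k))).Perm
        (List.range' 1 k ++ (List.range' (k + 2) (n - k) ++ [n + 2])) := by
      have := (List.perm_middle (a := n + 2)
        (l₁ := List.range' 1 k ++ List.range' (k + 2) (n - k)) (l₂ := [])).symm
      simpa [List.append_assoc] using this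
    exact p1.trans (p2.trans ((p3.cons _).trans List.perm_middle.symm))

def yft_two_equiv (n : ℕ) (u : List ℕ) (hn : n = u.sum + 2) :
    {t : List (List ℕ) // IsYFT n t ∧ shapeOf t = 2 :: u} ≃
      Fin (u.sum + 1) × {s : List (List ℕ) // IsYFT u.sum s ∧ shapeOf s = u} := by
  subst hn
  exact {
    toFun := fun x =>
      (⟨(x.val.getD 0 []).getD 1 0 - 1, by
        obtain ⟨t, ht, hsh⟩ := x
        obtain ⟨b, t₂, rfl, hsh₂, hb1, hb2, hbmem⟩ := yft_two_struct ht hsh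
        simp only [List.getD_cons_zero, List.getD_cons_succ]
        omega⟩,
      ⟨x.val.tail.map (List.map (squish ((x.val.getD 0 []).getD 1 0))), by
        obtain ⟨t, ht, hsh⟩ := x
        obtain ⟨b, t₂, rfl, hsh₂, hb1, hb2, hbmem⟩ := yft_two_struct ht hsh
        simp only [List.getD_cons_zero, List.getD_cons_succ, List.tail_cons]
        exact ⟨squish_yft hb1 hb2 hbmem ht, (shapeOf_map_map _ _).trans hsh₂⟩⟩)
    invFun := fun x =>
      ⟨[u.sum + 2, x.1.val + 1] :: x.2.val.map (List.map (unsquish (x.1.val + 1))), by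
        obtain ⟨⟨k, hk⟩, ⟨s, hs, hsh⟩⟩ := x
        refine ⟨unsquish_yft (by omega) hs, ?_⟩
        simp only [shapeOf, List.map_cons, List.length_cons, List.length_nil]
        rw [show (0 + 1 + 1 : ℕ) = 2 from rfl]
        congr 1
        rw [List.map_map]
        simpa [Function.comp_def, shapeOf] using hsh⟩
    left_inv := fun x => by
      obtain ⟨t, ht, hsh⟩ := x
      obtain ⟨b, t₂, rfl, hsh₂, hb1, hb2, hbmem⟩ := yft_two_struct ht hsh
      apply Subtype.ext
      simp only [List.getD_cons_zero, List.getD_cons_succ, List.tail_cons]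
      rw [show b - 1 + 1 = b from by omega, unsquish_squish_list hbmem]
    right_inv := fun x => by
      obtain ⟨⟨k, hk⟩, ⟨s, hs, hsh⟩⟩ := x
      refine Prod.ext ?_ ?_
      · apply Fin.ext
        simp only [List.getD_cons_zero, List.getD_cons_succ]
        omega
      · apply Subtype.ext
        simp only [List.getD_cons_zero, List.getD_cons_succ, List.tail_cons]
        exact squish_unsquish_list _ _ }

lemma card_yft (u : List ℕ) (hu : IsSnakeshape u) :
    Nat.card {t : List (List ℕ) // IsYFT u.sum t ∧ shapeOf t = u} = Fyft u := by
  revert hu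
  induction u with
  | nil =>
    intro _
    rw [show Fyft [] = 1 from rfl, Nat.card_eq_one_iff_unique]
    have hmem : IsYFT ([] : List ℕ).sum ([] : List (List ℕ)) ∧
        shapeOf ([] : List (List ℕ)) = [] := by
      refine ⟨⟨by simp, by simp, ?_, by simp⟩, rfl⟩
      intro i j _ hj
      simp at hj
    constructor
    · constructor
      intro a c
      apply Subtype.ext
      have ha := a.2.2
      have hc := c.2.2
      simp only [shapeOf, List.map_eq_nil_iff] at ha hc
      rw [ha, hc]
    · exact ⟨⟨[], hmem⟩⟩
  | cons p u ih =>
    intro hu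
    obtain ⟨hp, hu'⟩ := snake_tail hu
    rcases hp with rfl | rfl
    · rw [Nat.card_congr (yft_one_equiv ((1 :: u).sum) u (by simp [Nat.add_comm]))]
      rw [ih hu']
      simp [Fyft]
    · rw [Nat.card_congr (yft_two_equiv ((2 :: u).sum) u
        (by rw [List.sum_cons]; omega))]
      rw [Nat.card_prod, Nat.card_eq_fintype_card, Fintype.card_fin, ih hu']
      simp [Fyft]

end Main


end Aux

/-- the number of standard Young–Fibonacci tableaux of shape `u` is
`n!` divided by the product over all cells `c` of `u` of the number of cells
`c' ≤ c` in the poset `P_u`. -/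
theorem yft_count_hook_length_formula (n : ℕ) (u : List ℕ)
    (hu : IsSnakeshape u) (hsum : u.sum = n) :
    Nat.card {t : List (List ℕ) // IsYFT n t ∧ shapeOf t = u} =
      n.factorial /
        ∏ c ∈ cellsFinset u,
          Nat.card {c' : ℕ × ℕ // c' ∈ cellsFinset u ∧ cellLe u c' c} := by
  subst hsum
  rw [card_yft u hu, hook_prod hu, factorial_eq_tailProd_mul_Fyft hu,
    Nat.mul_div_cancel_left _ (tailProd_pos hu)]
end

section
/- For every permutation σ of {1,…,n}, the Young-Fibonacci insertion tableau of the inverse permutation equals the recording tableau of σ, that is, P(σ⁻¹) = Q(σ). -/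
/-- Sorting a two-element list into decreasing order. -/
def sortDesc : List ℕ → List ℕ
  | [a, b] => if b ≤ a then [a, b] else [b, a]
  | c => c

/-- The recording tableau `Q(σ)`: its `i`-th column contains the positions in `σ`
of the letters of the `i`-th column of `P(σ)`, larger position on top. -/
def Qcols {n : ℕ} (σ : Equiv.Perm (Fin n)) : List (List ℕ) :=
  (insertCols (permWord σ)).map
    (fun c => sortDesc (c.map (fun v => (permWord σ).idxOf v + 1)))

section Aux

lemma getLast!_concat' (l : List ℕ) (b : ℕ) : (l ++ [b]).getLast! = b := by
  cases l with
  | nil => rfl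
  | cons a t => simp [List.getLast!, List.getLast_append]

lemma getLast!_mem' (l : List ℕ) (h : l ≠ []) : l.getLast! ∈ l := by
  cases l with
  | nil => simp at h
  | cons a t => simp only [List.getLast!]; exact List.getLast_mem _

lemma insertColsAux_nil (fuel : ℕ) : insertColsAux fuel [] = [] := by
  cases fuel <;> rfl

lemma insertColsAux_step (fuel : ℕ) (w : List ℕ) (hw : w ≠ []) :
    insertColsAux (fuel+1) w =
      match ((w.dropLast).filter (fun y => decide (w.getLast! < y))).max? with
      | none => [w.getLast!] :: insertColsAux fuel w.dropLast
      | some m => [m, w.getLast!] :: insertColsAux fuel ((w.dropLast).erase m) := by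
  cases w with
  | nil => simp at hw
  | cons a l => rfl

lemma insertColsAux_fuel : ∀ (n : ℕ) (w : List ℕ), w.length ≤ n →
    ∀ fuel, w.length ≤ fuel → insertColsAux fuel w = insertColsAux w.length w := by
  intro n
  induction n with
  | zero =>
    intro w hw fuel _
    have : w = [] := List.eq_nil_of_length_eq_zero (Nat.le_zero.1 hw)
    subst this
    simp [insertColsAux_nil]
  | succ n ih =>
    intro w hw fuel hf
    rcases eq_or_ne w [] with rfl | hne
    · simp [insertColsAux_nil]
    have hwpos : 0 < w.length := List.length_pos_iff.2 hne
    obtain ⟨f, rfl⟩ : ∃ f, fuel = f + 1 := ⟨fuel - 1, by omega⟩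
    obtain ⟨k, hk⟩ : ∃ k, w.length = k + 1 := ⟨w.length - 1, by omega⟩
    rw [insertColsAux_step f w hne, hk, insertColsAux_step k w hne]
    have hdl : w.dropLast.length = k := by
      simp [List.length_dropLast, hk]
    rcases hm : ((w.dropLast).filter (fun y => decide (w.getLast! < y))).max? with _ | m
    · simp only
      rw [ih w.dropLast (by omega) f (by omega), ih w.dropLast (by omega) k (by omega)]
    · simp only
      have hle : ((w.dropLast).erase m).length ≤ k := by
        have := (List.erase_sublist (a := m) (l := w.dropLast)).length_le
        omega
      rw [ih _ (by omega) f (by omega), ih _ (by omega) k (by omega)]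

lemma insertColsAux_eq (fuel : ℕ) (w : List ℕ) (h : w.length ≤ fuel) :
    insertColsAux fuel w = insertCols w :=
  insertColsAux_fuel w.length w le_rfl fuel h

end Aux

section Aux2

lemma mem_of_mem_insertColsAux : ∀ (fuel : ℕ) (w : List ℕ) (y : ℕ),
    y ∈ (insertColsAux fuel w).flatten → y ∈ w := by
  intro fuel
  induction fuel with
  | zero => intro w y hy; simp [insertColsAux] at hy
  | succ f ih =>
    intro w y hy
    rcases eq_or_ne w [] with rfl | hw
    · simp [insertColsAux_nil] at hy
    rw [insertColsAux_step f w hw] at hy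
    rcases hm : ((w.dropLast).filter (fun z => decide (w.getLast! < z))).max? with _ | m <;>
      rw [hm] at hy
    · simp only [List.flatten_cons, List.mem_append] at hy
      rcases hy with hy | hy
      · simp at hy
        subst hy
        simpa using getLast!_mem' w hw
      · exact (List.dropLast_sublist w).subset (ih _ _ hy)
    · simp only [List.flatten_cons, List.mem_append] at hy
      have hmm : m ∈ (w.dropLast).filter (fun z => decide (w.getLast! < z)) :=
        List.max?_mem hm
      have hmw : m ∈ w := (List.dropLast_sublist w).subset (List.mem_of_mem_filter hmm)
      simp only [List.mem_cons, List.mem_singleton] at hy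
      rcases hy with (rfl | rfl | h) | hy
      · exact hmw
      · exact getLast!_mem' w hw
      · simp at h
      · exact (List.dropLast_sublist w).subset
          ((List.erase_sublist (a := m) (l := w.dropLast)).subset (ih _ _ hy))

/-- label lookup -/
def lab (l : List (ℕ × ℕ)) (v : ℕ) : ℕ :=
  (l.map Prod.fst).getD ((l.map Prod.snd).idxOf v) 0

lemma lab_eq : ∀ (l : List (ℕ × ℕ)), (l.map Prod.snd).Nodup →
    ∀ a b : ℕ, (a, b) ∈ l → lab l b = a := by
  intro l
  induction l with
  | nil => intro _ a b h; simp at h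
  | cons p rest ih =>
    intro hnd a b h
    simp only [List.map_cons, List.nodup_cons] at hnd
    rcases List.mem_cons.1 h with rfl | h'
    · simp [lab, List.idxOf_cons_self]
    · have hb : b ∈ rest.map Prod.snd := List.mem_map.2 ⟨(a, b), h', rfl⟩
      have hne : b ≠ p.2 := by rintro rfl; exact hnd.1 hb
      simp only [lab, List.map_cons]
      rw [List.idxOf_cons_ne _ (by simpa using hne.symm)]
      simpa [lab] using ih hnd.2 a b h'

lemma erase_inst_eq {α : Type*} [DecidableEq α] [inst : BEq α] [LawfulBEq α] (l : List α) (a : α) :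
    @List.erase α inst l a = @List.erase α instBEqOfDecidableEq l a := by
  induction l with
  | nil => rfl
  | cons b t ih =>
    rw [@List.erase_cons α inst a b t, @List.erase_cons α instBEqOfDecidableEq a b t]
    rcases eq_or_ne b a with rfl | h
    · simp
    · rw [if_neg (by simpa using h), if_neg (by simpa using h), ih]

lemma perm_erase' {α : Type*} [DecidableEq α] [inst : BEq α] [LawfulBEq α] {l₁ l₂ : List α}
    (a : α) (h : l₁.Perm l₂) :
    (@List.erase α inst l₁ a).Perm (@List.erase α inst l₂ a) := by
  have e1 := erase_inst_eq (inst := inst) l₁ a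
  have e2 := erase_inst_eq (inst := inst) l₂ a
  exact h.erase a

lemma map_erase_of_nodup_map {α β : Type*} [BEq α] [LawfulBEq α] [BEq β] [LawfulBEq β] (f : α → β) :
    ∀ (l : List α), (l.map f).Nodup → ∀ a, a ∈ l → (l.erase a).map f = (l.map f).erase (f a) := by
  intro l
  induction l with
  | nil => intro _ a ha; simp at ha
  | cons b rest ih =>
    intro hnd a ha
    simp only [List.map_cons, List.nodup_cons] at hnd
    rcases List.mem_cons.1 ha with rfl | ha'
    · simp [List.erase_cons_head]
    · have hfa : f a ∈ rest.map f := List.mem_map.2 ⟨a, ha', rfl⟩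
      have hne : a ≠ b := by rintro rfl; exact hnd.1 hfa
      have hfne : f b ≠ f a := by rintro h; exact hnd.1 (h ▸ hfa)
      rw [List.erase_cons_tail (by simpa using hne.symm), List.map_cons,
        List.map_cons, List.erase_cons_tail (by simpa using hfne)]
      rw [ih hnd.2 a ha']

end Aux2

section Aux3

lemma sortDesc_single (a : ℕ) : sortDesc [a] = [a] := rfl

lemma sortDesc_pair (a b : ℕ) : sortDesc [a, b] = if b ≤ a then [a, b] else [b, a] := rfl

lemma insertCols_concat_none (w : List ℕ) (x : ℕ) (h : ∀ y ∈ w, ¬ x < y) :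
    insertCols (w ++ [x]) = [x] :: insertCols w := by
  have hlen : (w ++ [x]).length = w.length + 1 := by simp
  rw [insertCols, hlen, insertColsAux_step w.length (w ++ [x]) (by simp)]
  rw [List.dropLast_concat, getLast!_concat']
  have hf : w.filter (fun y => decide (x < y)) = [] :=
    List.filter_eq_nil_iff.2 (by intro a ha; simpa using h a ha)
  rw [hf]
  rfl

lemma insertCols_concat_some (w : List ℕ) (x m : ℕ) (hm : m ∈ w) (hxm : x < m)
    (hub : ∀ y ∈ w, y ≤ m) :
    insertCols (w ++ [x]) = [m, x] :: insertCols (w.erase m) := by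
  have hlen : (w ++ [x]).length = w.length + 1 := by simp
  rw [insertCols, hlen, insertColsAux_step w.length (w ++ [x]) (by simp)]
  rw [List.dropLast_concat, getLast!_concat']
  have hf : (w.filter (fun y => decide (x < y))).max? = some m := by
    rw [List.max?_eq_some_iff']
    constructor
    · exact List.mem_filter.2 ⟨hm, by simpa using hxm⟩
    · intro b hb; exact hub b (List.mem_of_mem_filter hb)
  rw [hf]
  simp only
  rw [insertColsAux_eq w.length (w.erase m) ((List.erase_sublist (a := m) (l := w)).length_le)]

end Aux3

section Main

lemma lab_agree (l₂ l : List (ℕ × ℕ)) (hsub : ∀ p ∈ l₂, p ∈ l)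
    (hnd : (l.map Prod.snd).Nodup) (hnd₂ : (l₂.map Prod.snd).Nodup)
    (y : ℕ) (hy : y ∈ l₂.map Prod.snd) : lab l y = lab l₂ y := by
  obtain ⟨p, hp, rfl⟩ := List.mem_map.1 hy
  rw [lab_eq l₂ hnd₂ p.1 p.2 (by simpa using hp),
    lab_eq l hnd p.1 p.2 (by simpa using hsub p hp)]

lemma main_lemma : ∀ (k : ℕ) (l : List (ℕ × ℕ)) (t : List ℕ),
    l.length ≤ k →
    List.Pairwise (· < ·) (l.map Prod.fst) →
    (l.map Prod.snd).Nodup →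
    (∃ l' : List (ℕ × ℕ), l'.Perm l ∧ List.Pairwise (· < ·) (l'.map Prod.snd) ∧ t = l'.map Prod.fst) →
    insertCols t = (insertCols (l.map Prod.snd)).map (fun c => sortDesc (c.map (lab l))) := by
  intro k
  induction k with
  | zero =>
    rintro l t hlen - - ⟨l', hperm, -, rfl⟩
    have hl : l = [] := List.eq_nil_of_length_eq_zero (Nat.le_zero.1 hlen)
    subst hl
    have : l' = [] := hperm.eq_nil
    subst this
    rfl
  | succ k ih =>
    rintro l t hlen hfst hsnd ⟨l', hperm, hsorted, rfl⟩
    rcases List.eq_nil_or_concat l with rfl | ⟨l₀, b, hl⟩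
    · have : l' = [] := hperm.eq_nil
      subst this
      rfl
    obtain ⟨P, x⟩ := b
    rw [List.concat_eq_append] at hl
    subst hl
    -- basic facts about l = l₀ ++ [(P, x)]
    have hlen₀ : l₀.length ≤ k := by
      have : (l₀ ++ [(P, x)]).length = l₀.length + 1 := by simp
      omega
    have hfstA : List.Pairwise (· < ·) (l₀.map Prod.fst ++ [P]) := by simpa using hfst
    obtain ⟨hfst₀, -, hrelP⟩ := List.pairwise_append.1 hfstA
    have hPub : ∀ a ∈ l₀.map Prod.fst, a < P := fun a ha => hrelP a ha P (by simp)
    have hsndA : (l₀.map Prod.snd ++ [x]).Nodup := by simpa using hsnd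
    obtain ⟨hnd₀, -, hdisj⟩ := List.nodup_append.1 hsndA
    have hxv₀ : x ∉ l₀.map Prod.snd := fun h => hdisj _ h _ (by simp) rfl
    have hlnd : (l₀ ++ [(P, x)]).Nodup := List.Nodup.of_map Prod.snd hsnd
    have hPxl₀ : (P, x) ∉ l₀ := fun h => (List.nodup_append.1 hlnd).2.2 _ h _ (by simp) rfl
    have hfstnd : ((l₀ ++ [(P, x)]).map Prod.fst).Nodup := hfst.imp ne_of_lt
    -- decompose l'
    have hlen' : l'.length = l₀.length + 1 := by rw [hperm.length_eq]; simp
    rcases List.eq_nil_or_concat l' with hnil | ⟨l₃, a, hl'⟩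
    · rw [hnil] at hlen'; simp at hlen'
    obtain ⟨Q, M⟩ := a
    rw [List.concat_eq_append] at hl'
    subst hl'
    have hsortedA : List.Pairwise (· < ·) (l₃.map Prod.snd ++ [M]) := by simpa using hsorted
    obtain ⟨hsorted₃, -, hrelM⟩ := List.pairwise_append.1 hsortedA
    have hQMl : (Q, M) ∈ l₀ ++ [(P, x)] := hperm.subset (by simp)
    have hMub : ∀ y ∈ (l₀ ++ [(P, x)]).map Prod.snd, y ≤ M := by
      intro y hy
      have hy' : y ∈ (l₃ ++ [(Q, M)]).map Prod.snd := ((hperm.map Prod.snd).mem_iff).2 hy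
      simp only [List.map_append, List.map_cons, List.map_nil, List.mem_append,
        List.mem_singleton] at hy'
      rcases hy' with h | h
      · exact le_of_lt (hrelM y h M (by simp))
      · omega
    have hl'nd : (l₃ ++ [(Q, M)]).Nodup := (hperm.nodup_iff).2 hlnd
    have hQMl₃ : (Q, M) ∉ l₃ := fun h => (List.nodup_append.1 hl'nd).2.2 _ h _ (by simp) rfl
    have hl₃perm : l₃.Perm ((l₀ ++ [(P, x)]).erase (Q, M)) := by
      have h1 := perm_erase' (Q, M) hperm
      rwa [List.erase_append_right _ hQMl₃, List.erase_cons_head, List.append_nil] at h1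
    -- t-side upper bound for fst
    have hfsub : ∀ y ∈ l₃.map Prod.fst, y ≤ P := by
      intro y hy
      have hy' : y ∈ (l₀ ++ [(P, x)]).map Prod.fst :=
        ((hperm.map Prod.fst).mem_iff).1 (by simp [hy])
      simp only [List.map_append, List.map_cons, List.map_nil, List.mem_append,
        List.mem_singleton] at hy'
      rcases hy' with h | h
      · exact le_of_lt (hPub y h)
      · omega
    have htshape : (l₃ ++ [(Q, M)]).map Prod.fst = l₃.map Prod.fst ++ [Q] := by simp
    have hvshape : (l₀ ++ [(P, x)]).map Prod.snd = l₀.map Prod.snd ++ [x] := by simp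
    rcases hmx : ((l₀.map Prod.snd).filter (fun y => decide (x < y))).max? with _ | M'
    · -- Case A : x is a new maximum
      have hfe : (l₀.map Prod.snd).filter (fun y => decide (x < y)) = [] :=
        List.max?_eq_none_iff.1 hmx
      have hnolt : ∀ y ∈ l₀.map Prod.snd, ¬ x < y := by
        intro y hy hlt
        have : y ∈ (l₀.map Prod.snd).filter (fun y => decide (x < y)) :=
          List.mem_filter.2 ⟨hy, by simpa using hlt⟩
        rw [hfe] at this; simp at this
      have hxM : x ≤ M := hMub x (by simp)
      have hMx : M ≤ x := by
        have hMmem : M ∈ (l₀ ++ [(P, x)]).map Prod.snd := List.mem_map.2 ⟨(Q, M), hQMl, rfl⟩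
        simp only [List.map_append, List.map_cons, List.map_nil, List.mem_append,
          List.mem_singleton] at hMmem
        rcases hMmem with h | h
        · exact le_of_not_gt (hnolt M h)
        · omega
      have hMeq : M = x := le_antisymm hMx hxM
      subst hMeq
      have hQPx : (Q, M) = (P, M) := List.inj_on_of_nodup_map hsnd hQMl (by simp) rfl
      have hQeq : Q = P := by
        have := congrArg Prod.fst hQPx; simpa using this
      subst hQeq
      rw [htshape, hvshape]
      rw [insertCols_concat_none (l₃.map Prod.fst) Q (fun y hy => not_lt.2 (hfsub y hy))]
      rw [insertCols_concat_none (l₀.map Prod.snd) M (fun y hy => hnolt y hy)]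
      rw [List.map_cons]
      congr 1
      · have hlab : lab (l₀ ++ [(Q, M)]) M = Q := lab_eq _ hsnd Q M (by simp)
        simp [hlab, sortDesc_single]
      · rw [ih l₀ (l₃.map Prod.fst) hlen₀ hfst₀ hnd₀
          ⟨l₃, (List.perm_append_right_iff [(Q, M)]).1 hperm, hsorted₃, rfl⟩]
        apply List.map_congr_left
        intro c hc
        congr 1
        apply List.map_congr_left
        intro y hy
        have hyv : y ∈ l₀.map Prod.snd :=
          mem_of_mem_insertColsAux _ _ y (List.mem_flatten.2 ⟨c, hc, hy⟩)
        exact (lab_agree l₀ (l₀ ++ [(Q, M)]) (fun p hp => by simp [hp]) hsnd hnd₀ y hyv).symm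
    · -- Case B : x gets matched with M' = M
      obtain ⟨hmemf, hubf⟩ := List.max?_eq_some_iff'.1 hmx
      obtain ⟨hM'v₀, hxM'⟩ : M' ∈ l₀.map Prod.snd ∧ x < M' := by
        have := List.mem_filter.1 hmemf
        exact ⟨this.1, by simpa using this.2⟩
      have hM'ub : ∀ y ∈ (l₀ ++ [(P, x)]).map Prod.snd, y ≤ M' := by
        intro y hy
        simp only [List.map_append, List.map_cons, List.map_nil, List.mem_append,
          List.mem_singleton] at hy
        rcases hy with h | h
        · rcases lt_or_ge x y with h2 | h2
          · exact hubf y (List.mem_filter.2 ⟨h, by simpa using h2⟩)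
          · omega
        · omega
      have hMeq : M = M' := le_antisymm
        (hM'ub M (List.mem_map.2 ⟨(Q, M), hQMl, rfl⟩))
        (hMub M' (by simp only [List.map_append]; exact List.mem_append_left _ hM'v₀))
      subst hMeq
      have hxM : x < M := hxM'
      have hQMl₀ : (Q, M) ∈ l₀ := by
        rcases List.mem_append.1 hQMl with h | h
        · exact h
        · simp at h; omega
      have hQP : Q < P := hPub Q (List.mem_map.2 ⟨(Q, M), hQMl₀, rfl⟩)
      have hPxl₃ : (P, x) ∈ l₃ := by
        have : (P, x) ∈ l₃ ++ [(Q, M)] := (hperm.mem_iff).2 (by simp)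
        rcases List.mem_append.1 this with h | h
        · exact h
        · exfalso; simp at h; omega
      have hPfs₃ : P ∈ l₃.map Prod.fst := List.mem_map.2 ⟨(P, x), hPxl₃, rfl⟩
      -- nodup of l₃.map fst
      have hfs₃nd : (l₃.map Prod.fst).Nodup := by
        have h1 : (((l₀ ++ [(P, x)]).erase (Q, M)).map Prod.fst).Nodup :=
          List.Nodup.sublist ((List.erase_sublist).map Prod.fst) hfstnd
        exact ((hl₃perm.map Prod.fst).nodup_iff).2 h1
      have ht₂eq : (l₃.erase (P, x)).map Prod.fst = (l₃.map Prod.fst).erase P :=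
        map_erase_of_nodup_map Prod.fst l₃ hfs₃nd (P, x) hPxl₃
      have hl₂snd : ((l₀.erase (Q, M)).map Prod.snd) = (l₀.map Prod.snd).erase M :=
        map_erase_of_nodup_map Prod.snd l₀ hnd₀ (Q, M) hQMl₀
      have hleft : (l₀ ++ [(P, x)]).erase (Q, M) = l₀.erase (Q, M) ++ [(P, x)] :=
        List.erase_append_left _ hQMl₀
      have hPxl₂ : (P, x) ∉ l₀.erase (Q, M) := fun h => hPxl₀ ((List.erase_sublist).subset h)
      have hl₄perm : (l₃.erase (P, x)).Perm (l₀.erase (Q, M)) := by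
        have h1 := perm_erase' (P, x) hl₃perm
        rwa [hleft, List.erase_append_right _ hPxl₂, List.erase_cons_head,
          List.append_nil] at h1
      -- assemble
      rw [htshape, hvshape]
      rw [insertCols_concat_some (l₃.map Prod.fst) Q P hPfs₃ hQP hfsub]
      rw [insertCols_concat_some (l₀.map Prod.snd) x M hM'v₀ hxM
        (fun y hy => hMub y (by simp only [List.map_append]; exact List.mem_append_left _ hy))]
      rw [List.map_cons]
      congr 1
      · have hlabM : lab (l₀ ++ [(P, x)]) M = Q := lab_eq _ hsnd Q M hQMl
        have hlabx : lab (l₀ ++ [(P, x)]) x = P := lab_eq _ hsnd P x (by simp)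
        simp only [List.map_cons, List.map_nil, hlabM, hlabx, sortDesc_pair]
        rw [if_neg (not_le.2 hQP)]
      · have hnd₂ : ((l₀.erase (Q, M)).map Prod.snd).Nodup :=
          List.Nodup.sublist ((List.erase_sublist).map Prod.snd) hnd₀
        rw [ih (l₀.erase (Q, M)) ((l₃.map Prod.fst).erase P)
          (le_trans (List.Sublist.length_le (List.erase_sublist)) hlen₀)
          (List.Pairwise.sublist ((List.erase_sublist).map Prod.fst) hfst₀)
          hnd₂
          ⟨l₃.erase (P, x), hl₄perm,
            List.Pairwise.sublist ((List.erase_sublist).map Prod.snd) hsorted₃,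
            ht₂eq.symm⟩]
        rw [hl₂snd]
        apply List.map_congr_left
        intro c hc
        congr 1
        apply List.map_congr_left
        intro y hy
        have hyv : y ∈ (l₀.map Prod.snd).erase M :=
          mem_of_mem_insertColsAux _ _ y (List.mem_flatten.2 ⟨c, hc, hy⟩)
        rw [← hl₂snd] at hyv
        exact (lab_agree (l₀.erase (Q, M)) (l₀ ++ [(P, x)])
          (fun p hp => List.mem_append_left _ ((List.erase_sublist).subset hp))
          hsnd hnd₂ y hyv).symm

end Main

/-- `P(σ⁻¹) = Q(σ)`. -/
theorem insertion_of_inverse_eq_recording (n : ℕ) (σ : Equiv.Perm (Fin n)) :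
    insertCols (permWord σ⁻¹) = Qcols σ := by
  set f : Fin n → ℕ × ℕ := fun i => ((i : ℕ) + 1, (σ i : ℕ) + 1) with hf
  set l : List (ℕ × ℕ) := List.ofFn f with hl
  have hsnd : l.map Prod.snd = permWord σ := by
    rw [hl, List.map_ofFn]; rfl
  have hfstl : l.map Prod.fst = List.ofFn (fun i : Fin n => (i : ℕ) + 1) := by
    rw [hl, List.map_ofFn]; rfl
  have hpw : List.Pairwise (· < ·) (l.map Prod.fst) := by
    rw [hfstl, List.pairwise_ofFn]
    intro i j h
    have : (i : ℕ) < (j : ℕ) := h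
    omega
  have hnd : (l.map Prod.snd).Nodup := by
    rw [hsnd, permWord, List.nodup_ofFn]
    intro i j h
    simp only at h
    exact σ.injective (Fin.ext (by omega))
  have hwit : ∃ l' : List (ℕ × ℕ), l'.Perm l ∧
      List.Pairwise (· < ·) (l'.map Prod.snd) ∧ permWord σ⁻¹ = l'.map Prod.fst := by
    refine ⟨List.ofFn (f ∘ ⇑σ⁻¹), ?_, ?_, ?_⟩
    · exact Equiv.Perm.ofFn_comp_perm σ⁻¹ f
    · rw [List.map_ofFn, List.pairwise_ofFn]
      intro i j h
      simp only [Function.comp, hf, Equiv.Perm.inv_def, Equiv.apply_symm_apply]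
      have : (i : ℕ) < (j : ℕ) := h
      omega
    · rw [List.map_ofFn, permWord]
      congr 1
  have hmain := main_lemma n l (permWord σ⁻¹) (by rw [hl]; simp) hpw hnd hwit
  rw [hmain, hsnd, Qcols]
  apply List.map_congr_left
  intro c hc
  congr 1
  apply List.map_congr_left
  intro v hv
  have hvmem : v ∈ permWord σ :=
    mem_of_mem_insertColsAux _ _ v (List.mem_flatten.2 ⟨c, hc, hv⟩)
  have hlenpw : (permWord σ).length = n := by rw [permWord, List.length_ofFn]
  have hidx : (permWord σ).idxOf v < n := by
    have := List.idxOf_lt_length_iff.2 hvmem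
    omega
  rw [lab, hsnd, hfstl]
  rw [List.getD_eq_getElem _ _ (by rw [List.length_ofFn]; exact hidx)]
  rw [List.getElem_ofFn]
end
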